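/- If G is a connected finite simple graph of order n ≥ 3, then b_dR(G) ≤ δ(G) + 2Δ(G) − 3, where δ(G) and Δ(G) denote the minimum and maximum degree of G. -/
import Mathlib


/-- A double Roman dominating function (DRDF) on a graph `G`: a function
`f : V → ℕ` taking values in `{0,1,2,3}` such that every vertex assigned `0`
has a neighbor assigned `3` or two distinct neighbors assigned `2`, and every
vertex assigned `1` has a neighbor assigned at least `2`. -/
def IsDRDF {V : Type*} (G : SimpleGraph V) (f : V → ℕ) : Prop :=
  (∀ v, f v ≤ 3) ∧
  (∀ v, f v = 0 →
    (∃ w, G.Adj v w ∧ f w = 3) ∨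
    (∃ w₁ w₂, G.Adj v w₁ ∧ G.Adj v w₂ ∧ w₁ ≠ w₂ ∧ f w₁ = 2 ∧ f w₂ = 2)) ∧
  (∀ v, f v = 1 → ∃ w, G.Adj v w ∧ 2 ≤ f w)

/-- The double Roman domination number `γ_dR(G)`: the minimum weight of a DRDF on `G`. -/
noncomputable def gammaDR {V : Type*} [Fintype V] (G : SimpleGraph V) : ℕ :=
  sInf {k | ∃ f : V → ℕ, IsDRDF G f ∧ ∑ v, f v = k}

/-- The double Roman bondage number `b_dR(G)`: the minimum cardinality of a set
`B` of edges of `G` such that `γ_dR(G - B) > γ_dR(G)`. -/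
noncomputable def bDR {V : Type*} [Fintype V] (G : SimpleGraph V) : ℕ :=
  sInf {k | ∃ B : Finset (Sym2 V), ↑B ⊆ G.edgeSet ∧ B.card = k ∧
    gammaDR G < gammaDR (G.deleteEdges ↑B)}


/-- If `G` is a connected graph of order `n ≥ 3`, then
`b_dR(G) ≤ δ(G) + 2Δ(G) − 3`. -/
theorem bDR_le_minDegree_add_two_maxDegree {V : Type*} [Fintype V]
    (G : SimpleGraph V) [DecidableRel G.Adj]
    (hconn : G.Connected) (hn : 3 ≤ Fintype.card V) :
    (bDR G : ℤ) ≤ (G.minDegree : ℤ) + 2 * G.maxDegree - 3 := by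
  classical
  have hne : Nonempty V := Fintype.card_pos_iff.mp (by omega)
  obtain ⟨v, hv⟩ := G.exists_minimal_degree_vertex
  have hnontriv : Nontrivial V := Fintype.one_lt_card_iff_nontrivial.mp (by omega)
  -- v has a neighbor u
  obtain ⟨u, huv⟩ : ∃ u, G.Adj v u := by
    obtain ⟨x0, hx0⟩ := exists_ne v
    obtain ⟨p⟩ := hconn.preconnected v x0
    cases p with
    | nil => exact absurd rfl hx0
    | cons h _ => exact ⟨_, h⟩
  -- max degree is at least 2
  have hΔ2 : 2 ≤ G.maxDegree := by
    by_contra h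
    push_neg at h
    have hu1 : G.degree u ≤ 1 := le_trans (G.degree_le_maxDegree u) (by omega)
    have hv1 : G.degree v ≤ 1 := le_trans (G.degree_le_maxDegree v) (by omega)
    have hvN : ∀ w, G.Adj v w → w = u := by
      intro w hw
      have h1 : w ∈ G.neighborFinset v := by simpa using hw
      have h2 : u ∈ G.neighborFinset v := by simpa using huv
      have hcard : (G.neighborFinset v).card ≤ 1 := by
        rwa [G.card_neighborFinset_eq_degree]
      exact Finset.card_le_one.mp hcard w h1 u h2
    have huN : ∀ w, G.Adj u w → w = v := by
      intro w hw
      have h1 : w ∈ G.neighborFinset u := by simpa using hw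
      have h2 : v ∈ G.neighborFinset u := by simpa using huv.symm
      have hcard : (G.neighborFinset u).card ≤ 1 := by
        rwa [G.card_neighborFinset_eq_degree]
      exact Finset.card_le_one.mp hcard w h1 v h2
    obtain ⟨x, hxu, hxv⟩ : ∃ x, x ≠ u ∧ x ≠ v := by
      by_contra hc
      push_neg at hc
      have hsub : (Finset.univ : Finset V) ⊆ {u, v} := by
        intro x _
        rcases eq_or_ne x u with rfl | hxu
        · exact Finset.mem_insert_self _ _
        · simp [hc x hxu]
      have := Finset.card_le_card hsub
      have h2 : ({u, v} : Finset V).card ≤ 2 := Finset.card_insert_le u {v} |>.trans (by simp)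
      simp only [Finset.card_univ] at this
      omega
    obtain ⟨p⟩ := hconn.preconnected v x
    have key : ∀ {s t : V} (p : G.Walk s t), (s = u ∨ s = v) → (t = u ∨ t = v) := by
      intro s t p
      induction p with
      | nil => exact id
      | cons hadj _ ih =>
        intro hs
        apply ih
        rcases hs with rfl | rfl
        · exact Or.inr (huN _ hadj)
        · exact Or.inl (hvN _ hadj)
    rcases key p (Or.inr rfl) with h | h
    · exact hxu h
    · exact hxv h
  -- the bondage set: all edges incident to u or v
  set B : Finset (Sym2 V) := G.incidenceFinset u ∪ G.incidenceFinset v with hB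
  have hBsub : ↑B ⊆ G.edgeSet := by
    intro e he
    rcases Finset.mem_union.mp he with h | h
    · exact ((G.mem_incidenceFinset u e).mp h).1
    · exact ((G.mem_incidenceFinset v e).mp h).1
  have hcardB : B.card + 1 ≤ G.degree u + G.degree v := by
    have h1 : B.card + (G.incidenceFinset u ∩ G.incidenceFinset v).card
        = G.degree u + G.degree v := by
      rw [hB, Finset.card_union_add_card_inter, G.card_incidenceFinset_eq_degree u,
        G.card_incidenceFinset_eq_degree v]
    have h2 : s(u, v) ∈ G.incidenceFinset u ∩ G.incidenceFinset v := by
      rw [Finset.mem_inter, G.mem_incidenceFinset u, G.mem_incidenceFinset v]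
      exact ⟨G.mk'_mem_incidenceSet_left_iff.mpr huv.symm,
        G.mk'_mem_incidenceSet_right_iff.mpr huv.symm⟩
    have h3 : 1 ≤ (G.incidenceFinset u ∩ G.incidenceFinset v).card :=
      Finset.card_pos.mpr ⟨_, h2⟩
    omega
  set H := G.deleteEdges ↑B with hH
  -- u and v are isolated in H
  have hIso : ∀ y w, (y = u ∨ y = v) → ¬ H.Adj y w := by
    intro y w hy hadj
    rw [hH, SimpleGraph.deleteEdges_adj] at hadj
    apply hadj.2
    rcases hy with rfl | rfl
    · exact Finset.mem_union_left _
        ((G.mem_incidenceFinset y _).mpr (G.mk'_mem_incidenceSet_left_iff.mpr hadj.1))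
    · exact Finset.mem_union_right _
        ((G.mem_incidenceFinset y _).mpr (G.mk'_mem_incidenceSet_left_iff.mpr hadj.1))
  have hHG : ∀ {a b : V}, H.Adj a b → G.Adj a b := by
    intro a b h
    exact (G.deleteEdges_le (↑B : Set (Sym2 V))) h
  -- weight sets are nonempty (constant 2 is a DRDF)
  have hNE : ∀ (G' : SimpleGraph V),
      {k | ∃ f : V → ℕ, IsDRDF G' f ∧ ∑ x, f x = k}.Nonempty := by
    intro G'
    refine ⟨∑ x, (fun _ : V => 2) x, fun _ => 2, ⟨fun _ => by norm_num, ?_, ?_⟩, rfl⟩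
    · intro w hw; simp at hw
    · intro w hw; simp at hw
  -- a minimum DRDF of H
  obtain ⟨f, hf, hfsum⟩ : ∃ f : V → ℕ, IsDRDF H f ∧ ∑ x, f x = gammaDR H :=
    Nat.sInf_mem (hNE H)
  obtain ⟨hf3, hf0, hf1⟩ := hf
  have hfu : 2 ≤ f u := by
    by_contra h
    push_neg at h
    have : f u = 0 ∨ f u = 1 := by omega
    rcases this with h0 | h1
    · rcases hf0 u h0 with ⟨w, hw, -⟩ | ⟨w, -, hw, -, -, -⟩
      · exact hIso u w (Or.inl rfl) hw
      · exact hIso u w (Or.inl rfl) hw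
    · obtain ⟨w, hw, -⟩ := hf1 u h1
      exact hIso u w (Or.inl rfl) hw
  have hfv : 2 ≤ f v := by
    by_contra h
    push_neg at h
    have : f v = 0 ∨ f v = 1 := by omega
    rcases this with h0 | h1
    · rcases hf0 v h0 with ⟨w, hw, -⟩ | ⟨w, -, hw, -, -, -⟩
      · exact hIso v w (Or.inr rfl) hw
      · exact hIso v w (Or.inr rfl) hw
    · obtain ⟨w, hw, -⟩ := hf1 v h1
      exact hIso v w (Or.inr rfl) hw
  have hvu : v ≠ u := huv.ne
  -- modify f into a DRDF of G of smaller weight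
  set f' : V → ℕ := Function.update (Function.update f v 3) u 0 with hf'
  have hf'u : f' u = 0 := by simp [hf']
  have hf'v : f' v = 3 := by
    rw [hf', Function.update_of_ne hvu, Function.update_self]
  have hf'x : ∀ x, x ≠ u → x ≠ v → f' x = f x := by
    intro x hxu hxv
    rw [hf', Function.update_of_ne hxu, Function.update_of_ne hxv]
  -- witnesses of f in H avoid u and v
  have hwit : ∀ {x w : V}, H.Adj x w → w ≠ u ∧ w ≠ v := by
    intro x w h
    constructor
    · rintro rfl; exact hIso w x (Or.inl rfl) h.symm
    · rintro rfl; exact hIso w x (Or.inr rfl) h.symm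
  have hf'DRDF : IsDRDF G f' := by
    refine ⟨?_, ?_, ?_⟩
    · intro x
      rcases eq_or_ne x u with rfl | hxu
      · rw [hf'u]; omega
      rcases eq_or_ne x v with rfl | hxv
      · rw [hf'v]
      · rw [hf'x x hxu hxv]; exact hf3 x
    · intro x hx
      rcases eq_or_ne x u with rfl | hxu
      · exact Or.inl ⟨v, huv.symm, hf'v⟩
      rcases eq_or_ne x v with rfl | hxv
      · rw [hf'v] at hx; omega
      · rw [hf'x x hxu hxv] at hx
        rcases hf0 x hx with ⟨w, hw, hw3⟩ | ⟨w₁, w₂, hw1, hw2, hne12, h21, h22⟩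
        · obtain ⟨hwu, hwv⟩ := hwit hw
          exact Or.inl ⟨w, hHG hw, by rw [hf'x w hwu hwv]; exact hw3⟩
        · obtain ⟨hw1u, hw1v⟩ := hwit hw1
          obtain ⟨hw2u, hw2v⟩ := hwit hw2
          exact Or.inr ⟨w₁, w₂, hHG hw1, hHG hw2, hne12,
            by rw [hf'x w₁ hw1u hw1v]; exact h21,
            by rw [hf'x w₂ hw2u hw2v]; exact h22⟩
    · intro x hx
      rcases eq_or_ne x u with rfl | hxu
      · rw [hf'u] at hx; omega
      rcases eq_or_ne x v with rfl | hxv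
      · rw [hf'v] at hx; omega
      · rw [hf'x x hxu hxv] at hx
        obtain ⟨w, hw, hw2⟩ := hf1 x hx
        obtain ⟨hwu, hwv⟩ := hwit hw
        exact ⟨w, hHG hw, by rw [hf'x w hwu hwv]; exact hw2⟩
  -- sum comparison
  have hsum' : ∑ x, f' x + (f u + f v) = ∑ x, f x + 3 := by
    have hmemu : u ∈ (Finset.univ : Finset V) := Finset.mem_univ u
    have hmemv : v ∈ (Finset.univ : Finset V).erase u :=
      Finset.mem_erase.mpr ⟨hvu, Finset.mem_univ v⟩
    have e1 : ∑ x, f' x = 0 + ∑ x ∈ Finset.univ.erase u, Function.update f v 3 x := by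
      rw [hf']
      rw [Finset.sum_update_of_mem hmemu]
      congr 1
      apply Finset.sum_congr
      · rw [Finset.sdiff_singleton_eq_erase]
      · intros; rfl
    have e2 : ∑ x ∈ Finset.univ.erase u, Function.update f v 3 x
        = 3 + ∑ x ∈ (Finset.univ.erase u).erase v, f x := by
      rw [Finset.sum_update_of_mem hmemv]
      congr 1
      apply Finset.sum_congr
      · rw [Finset.sdiff_singleton_eq_erase]
      · intros; rfl
    have e3 : f u + ∑ x ∈ Finset.univ.erase u, f x = ∑ x, f x :=
      Finset.add_sum_erase _ f hmemu
    have e4 : f v + ∑ x ∈ (Finset.univ.erase u).erase v, f x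
        = ∑ x ∈ Finset.univ.erase u, f x :=
      Finset.add_sum_erase _ f hmemv
    omega
  have hle : gammaDR G ≤ ∑ x, f' x := Nat.sInf_le ⟨f', hf'DRDF, rfl⟩
  have hlt : gammaDR G < gammaDR H := by omega
  have hbdr : bDR G ≤ B.card := Nat.sInf_le ⟨B, hBsub, rfl, hlt⟩
  have hδ : G.degree v = G.minDegree := hv.symm
  have hu_le : G.degree u ≤ G.maxDegree := G.degree_le_maxDegree u
  omega
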